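/- Let m be an odd integer with m ≥ 3 and n = 2^m − 1. Define T = { 1 ≤ j ≤ n−1 : w₂(j) ≡ 0 or 3 (mod 4) } and T' = { 1 ≤ j ≤ n−1 : w₂(j) ≡ 1 or 2 (mod 4) }. If m ≡ 1 (mod 4), then T and T' partition {1,...,n−1}, T = −T' (mod n), and |T| = |T'| = (n−1)/2. -/
import Mathlib


def w2 (x : ℕ) : ℕ := (Nat.digits 2 x).sum

lemma w2_bit (a b : ℕ) (hb : b ≤ 1) : w2 (2 * a + b) = b + w2 a := by
  rcases Nat.eq_zero_or_pos (2 * a + b) with h | h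
  · have ha : a = 0 := by omega
    have hb0 : b = 0 := by omega
    simp [ha, hb0, w2]
  · unfold w2
    rw [Nat.digits_def' (by norm_num : 1 < 2) h]
    have h1 : (2 * a + b) % 2 = b := by omega
    have h2 : (2 * a + b) / 2 = a := by omega
    rw [h1, h2]
    simp [Nat.add_comm]

lemma w2_compl (m : ℕ) : ∀ j, j < 2 ^ m → w2 j + w2 (2 ^ m - 1 - j) = m := by
  induction m with
  | zero => intro j hj; interval_cases j; simp [w2]
  | succ m ih =>
    intro j hj
    have hq : j / 2 < 2 ^ m := by
      have : 2 ^ (m + 1) = 2 * 2 ^ m := by ring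
      omega
    have hb : j % 2 ≤ 1 := by omega
    have hj2 : j = 2 * (j / 2) + j % 2 := by omega
    have hpow : 2 ^ (m + 1) = 2 * 2 ^ m := by ring
    have hrw : 2 ^ (m + 1) - 1 - j = 2 * (2 ^ m - 1 - j / 2) + (1 - j % 2) := by
      omega
    have h1 : w2 j = j % 2 + w2 (j / 2) := by
      conv_lhs => rw [hj2]
      exact w2_bit _ _ hb
    rw [hrw, w2_bit _ _ (by omega), h1]
    have := ih (j / 2) hq
    omega

theorem stmt15 (m : ℕ) (hm3 : 3 ≤ m) (hmodd : Odd m) (hm1 : m % 4 = 1)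
    (n : ℕ) (hn : n = 2 ^ m - 1) :
    let T : Finset ℕ :=
      (Finset.Icc 1 (n - 1)).filter (fun j => w2 j % 4 = 0 ∨ w2 j % 4 = 3)
    let T' : Finset ℕ :=
      (Finset.Icc 1 (n - 1)).filter (fun j => w2 j % 4 = 1 ∨ w2 j % 4 = 2)
    T ∪ T' = Finset.Icc 1 (n - 1) ∧ T ∩ T' = ∅ ∧
    T = T'.image (fun j => n - j) ∧
    T.card = (n - 1) / 2 ∧ T'.card = (n - 1) / 2 := by
  intro T T'
  have hpow : 8 ≤ 2 ^ m := by
    calc (8 : ℕ) = 2 ^ 3 := by norm_num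
    _ ≤ 2 ^ m := Nat.pow_le_pow_right (by norm_num) hm3
  have hn2 : 7 ≤ n := by omega
  have hcompl : ∀ j, 1 ≤ j → j ≤ n - 1 → w2 j + w2 (n - j) = m := by
    intro j h1 h2
    have hj : j < 2 ^ m := by omega
    have := w2_compl m j hj
    have : n - j = 2 ^ m - 1 - j := by omega
    rw [this]
    exact w2_compl m j hj
  have hunion : T ∪ T' = Finset.Icc 1 (n - 1) := by
    ext j
    simp only [T, T', Finset.mem_union, Finset.mem_filter, Finset.mem_Icc]
    have : w2 j % 4 < 4 := Nat.mod_lt _ (by norm_num)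
    constructor
    · rintro (⟨h, _⟩ | ⟨h, _⟩) <;> exact h
    · intro h; omega
  have hinter : T ∩ T' = ∅ := by
    ext j
    simp only [T, T', Finset.mem_inter, Finset.mem_filter, Finset.notMem_empty, iff_false]
    rintro ⟨⟨_, h1⟩, ⟨_, h2⟩⟩
    omega
  have himage : T = T'.image (fun j => n - j) := by
    ext j
    simp only [T, T', Finset.mem_image, Finset.mem_filter, Finset.mem_Icc]
    constructor
    · rintro ⟨⟨hj1, hj2⟩, hw⟩
      refine ⟨n - j, ⟨⟨by omega, by omega⟩, ?_⟩, by omega⟩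
      have := hcompl j hj1 hj2
      omega
    · rintro ⟨a, ⟨⟨ha1, ha2⟩, hw⟩, rfl⟩
      refine ⟨⟨by omega, by omega⟩, ?_⟩
      have := hcompl a ha1 ha2
      omega
  have hdisj : Disjoint T T' := Finset.disjoint_iff_inter_eq_empty.mpr hinter
  have hcard_eq : T.card = T'.card := by
    rw [himage]
    apply Finset.card_image_of_injOn
    intro a ha b hb hab
    simp only [T', Finset.coe_filter, Finset.mem_Icc, Set.mem_setOf_eq] at ha hb
    simp only at hab
    omega
  have hsum : T.card + T'.card = n - 1 := by
    rw [← Finset.card_union_of_disjoint hdisj, hunion, Nat.card_Icc]; omega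
  have hodd : n % 2 = 1 := by
    have : 2 ^ m % 2 = 0 := by
      have : (2 : ℕ) ∣ 2 ^ m := dvd_pow_self 2 (by omega)
      omega
    omega
  refine ⟨hunion, hinter, himage, by omega, by omega⟩
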